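/- Let J ⊂ {1,…,m} and let (x̄,σ̄) ∈ ℝⁿ × ℝᵐ be a J-LKKT point of L, i.e., A(σ̄)x̄ = b(σ̄), and for all j ∈ Jᶜ: σ̄_j ≥ 0, q_j(x̄) ≤ 0 and σ̄_j·q_j(x̄) = 0, and for all j ∈ J: q_j(x̄) = 0. Then (x̄,σ̄) ∈ X_J × Y_col^J and q₀(x̄) = L(x̄,σ̄) = D_L(σ̄). Moreover, if A(σ̄) is positive semidefinite, then σ̄ ∈ Y_col^{J+} and q₀(x̄) = inf_{x ∈ X_J} q₀(x) = L(x̄,σ̄) = sup_{σ ∈ Y_col^{J+}} D_L(σ) = D_L(σ̄); furthermore, if A(σ̄) is positive definite, then x̄ is the unique global minimizer of q₀ on X_J. -/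

import Mathlib

open Matrix Set

noncomputable section

/-- The quadratic function `x ↦ ½⟨x, A x⟩ − ⟨b, x⟩ + c`. -/
def qf {n : ℕ} (A : Matrix (Fin n) (Fin n) ℝ) (b : Fin n → ℝ) (c : ℝ) (x : Fin n → ℝ) : ℝ :=
  (1 / 2 : ℝ) * (x ⬝ᵥ A.mulVec x) - b ⬝ᵥ x + c

/-- `A(σ) = A₀ + Σ σ_k A_k`. -/
def Amat {n m : ℕ} (A0 : Matrix (Fin n) (Fin n) ℝ) (A : Fin m → Matrix (Fin n) (Fin n) ℝ)
    (σ : Fin m → ℝ) : Matrix (Fin n) (Fin n) ℝ :=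
  A0 + ∑ k, σ k • A k

/-- `b(σ) = b₀ + Σ σ_k b_k`. -/
def bvec {n m : ℕ} (b0 : Fin n → ℝ) (b : Fin m → Fin n → ℝ) (σ : Fin m → ℝ) : Fin n → ℝ :=
  b0 + ∑ k, σ k • b k

/-- `q(x) = (q₁(x), …, q_m(x))`. -/
def qvec {n m : ℕ} (A : Fin m → Matrix (Fin n) (Fin n) ℝ) (b : Fin m → Fin n → ℝ)
    (c : Fin m → ℝ) (x : Fin n → ℝ) : Fin m → ℝ :=
  fun i => qf (A i) (b i) (c i) x

/-- Subdifferential of an (extended-real-valued) convex function represented by its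
finite part `V` and its effective domain `dV`; it is empty outside `dV`. -/
def subdiff {m : ℕ} (V : (Fin m → ℝ) → ℝ) (dV : Set (Fin m → ℝ)) (y : Fin m → ℝ) :
    Set (Fin m → ℝ) :=
  {σ | y ∈ dV ∧ ∀ y' ∈ dV, (y' - y) ⬝ᵥ σ ≤ V y' - V y}

/-- `V ∈ Γ(ℝᵐ)`: proper, convex and lower semicontinuous (closed epigraph), where the
extended-real-valued function is represented by its finite part `V` on its domain `dV`. -/
def properLscConvex {m : ℕ} (V : (Fin m → ℝ) → ℝ) (dV : Set (Fin m → ℝ)) : Prop :=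
  dV.Nonempty ∧ ConvexOn ℝ dV V ∧
    IsClosed {p : (Fin m → ℝ) × ℝ | p.1 ∈ dV ∧ V p.1 ≤ p.2}

/-- `(Vs, dVs)` is the Fenchel conjugate of `(V, dV)`:
`dVs` is the set where the supremum is finite and `Vs` its value there. -/
def isConjugate {m : ℕ} (V : (Fin m → ℝ) → ℝ) (dV : Set (Fin m → ℝ))
    (Vs : (Fin m → ℝ) → ℝ) (dVs : Set (Fin m → ℝ)) : Prop :=
  dVs = {σ | BddAbove ((fun y => y ⬝ᵥ σ - V y) '' dV)} ∧
    ∀ σ ∈ dVs, Vs σ = sSup ((fun y => y ⬝ᵥ σ - V y) '' dV)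

/-- The continuous linear functional `v ↦ ⟨g, v⟩`. -/
def dotCLM {k : ℕ} (g : Fin k → ℝ) : (Fin k → ℝ) →L[ℝ] ℝ :=
  LinearMap.toContinuousLinearMap
    { toFun := fun v => g ⬝ᵥ v
      map_add' := fun u v => by simp [dotProduct_add]
      map_smul' := fun t v => by simp [dotProduct_smul, smul_eq_mul] }

/-- The continuous linear map `v ↦ M v`. -/
def matCLM {k l : ℕ} (M : Matrix (Fin l) (Fin k) ℝ) : (Fin k → ℝ) →L[ℝ] (Fin l → ℝ) :=
  LinearMap.toContinuousLinearMap M.mulVecLin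


section Aux

lemma symm_dot {k : ℕ} {M : Matrix (Fin k) (Fin k) ℝ} (hM : M.IsSymm) (u v : Fin k → ℝ) :
    u ⬝ᵥ M *ᵥ v = v ⬝ᵥ M *ᵥ u := by
  rw [Matrix.dotProduct_mulVec]
  nth_rewrite 1 [← hM.eq]
  rw [Matrix.vecMul_transpose, dotProduct_comm]

lemma sum_mulVec' {k l : ℕ} (f : Fin l → Matrix (Fin k) (Fin k) ℝ) (x : Fin k → ℝ) :
    (∑ i, f i) *ᵥ x = ∑ i, (f i) *ᵥ x := by
  ext j
  simp [Matrix.mulVec, dotProduct, Finset.sum_apply, Matrix.sum_apply,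
    Finset.sum_mul]
  exact Finset.sum_comm

lemma dot_sum' {k l : ℕ} (x : Fin k → ℝ) (g : Fin l → Fin k → ℝ) :
    x ⬝ᵥ (∑ i, g i) = ∑ i, x ⬝ᵥ g i := by
  simp [dotProduct, Finset.sum_apply, Finset.mul_sum]
  exact Finset.sum_comm

lemma sum_dot' {k l : ℕ} (g : Fin l → Fin k → ℝ) (x : Fin k → ℝ) :
    (∑ i, g i) ⬝ᵥ x = ∑ i, g i ⬝ᵥ x := by
  simp [dotProduct, Finset.sum_apply, Finset.sum_mul]
  exact Finset.sum_comm

lemma quad_expand {k : ℕ} {M : Matrix (Fin k) (Fin k) ℝ} (hM : M.IsSymm)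
    {v : Fin k → ℝ} {c : ℝ} {x0 : Fin k → ℝ} (h : M *ᵥ x0 = v) (x : Fin k → ℝ) :
    qf M v c x = qf M v c x0 + (1/2 : ℝ) * ((x - x0) ⬝ᵥ M *ᵥ (x - x0)) := by
  subst h
  have hsym := symm_dot hM x x0
  have hcomm : (M *ᵥ x0) ⬝ᵥ x = x ⬝ᵥ M *ᵥ x0 := dotProduct_comm _ _
  have hc0 : (M *ᵥ x0) ⬝ᵥ x0 = x0 ⬝ᵥ M *ᵥ x0 := dotProduct_comm _ _
  have hexp : (x - x0) ⬝ᵥ M *ᵥ (x - x0)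
      = x ⬝ᵥ M *ᵥ x - x ⬝ᵥ M *ᵥ x0 - x0 ⬝ᵥ M *ᵥ x + x0 ⬝ᵥ M *ᵥ x0 := by
    rw [Matrix.mulVec_sub, sub_dotProduct, dotProduct_sub,
      dotProduct_sub]
    ring
  simp only [qf]
  rw [hexp, hcomm, hc0, hsym]
  ring

lemma Amat_symm {n m : ℕ} {A0 : Matrix (Fin n) (Fin n) ℝ}
    {A : Fin m → Matrix (Fin n) (Fin n) ℝ} (hA0 : A0.IsSymm) (hA : ∀ i, (A i).IsSymm)
    (σ : Fin m → ℝ) : (Amat A0 A σ).IsSymm := by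
  unfold Matrix.IsSymm Amat
  rw [Matrix.transpose_add, Matrix.transpose_sum, hA0.eq]
  congr 1
  exact Finset.sum_congr rfl fun i _ => by rw [Matrix.transpose_smul, (hA i).eq]

lemma lag_eq {n m : ℕ} (A0 : Matrix (Fin n) (Fin n) ℝ)
    (A : Fin m → Matrix (Fin n) (Fin n) ℝ) (b0 : Fin n → ℝ) (b : Fin m → Fin n → ℝ)
    (c : Fin m → ℝ) (σ : Fin m → ℝ) (x : Fin n → ℝ) :
    qf A0 b0 0 x + qvec A b c x ⬝ᵥ σ
      = qf (Amat A0 A σ) (bvec b0 b σ) (∑ k, σ k * c k) x := by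
  have h1 : x ⬝ᵥ (Amat A0 A σ) *ᵥ x
      = x ⬝ᵥ A0 *ᵥ x + ∑ k, σ k * (x ⬝ᵥ (A k) *ᵥ x) := by
    rw [Amat, Matrix.add_mulVec, dotProduct_add, sum_mulVec', dot_sum']
    congr 1
    exact Finset.sum_congr rfl fun i _ => by
      rw [Matrix.smul_mulVec, dotProduct_smul, smul_eq_mul]
  have h2 : (bvec b0 b σ) ⬝ᵥ x = b0 ⬝ᵥ x + ∑ k, σ k * (b k ⬝ᵥ x) := by
    rw [bvec, add_dotProduct, sum_dot']
    congr 1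
    exact Finset.sum_congr rfl fun i _ => by
      rw [smul_dotProduct, smul_eq_mul]
  have h3 : qvec A b c x ⬝ᵥ σ
      = ∑ k, (σ k * ((1/2 : ℝ) * (x ⬝ᵥ (A k) *ᵥ x)) - σ k * (b k ⬝ᵥ x) + σ k * c k) := by
    simp only [dotProduct, qvec, qf]
    exact Finset.sum_congr rfl fun i _ => by ring
  simp only [qf, h1, h2, h3, Finset.mul_sum, Finset.sum_add_distrib, Finset.sum_sub_distrib]
  have h4 : ∑ k, σ k * ((1/2:ℝ) * (x ⬝ᵥ A k *ᵥ x)) = (1/2:ℝ) * ∑ k, σ k * (x ⬝ᵥ A k *ᵥ x) := by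
    rw [Finset.mul_sum]; exact Finset.sum_congr rfl fun i _ => by ring
  rw [h4]
  ring

end Aux

/-- If `(x̄,σ̄)` is a `J`-LKKT point of the Lagrangian `L`, then
`(x̄,σ̄) ∈ X_J × Y_col^J` and `q₀(x̄) = L(x̄,σ̄) = D_L(σ̄)`; if moreover `A(σ̄) ⪰ 0`, then
`σ̄ ∈ Y_col^{J+}` and `q₀(x̄) = inf_{X_J} q₀ = L(x̄,σ̄) = sup_{Y_col^{J+}} D_L = D_L(σ̄)`;
if `A(σ̄) ≻ 0`, then `x̄` is the unique global minimizer of `q₀` on `X_J`. -/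
theorem statement7 {n m : ℕ}
    (A0 : Matrix (Fin n) (Fin n) ℝ) (A : Fin m → Matrix (Fin n) (Fin n) ℝ)
    (b0 : Fin n → ℝ) (b : Fin m → Fin n → ℝ) (c : Fin m → ℝ)
    (hA0 : A0.IsSymm) (hA : ∀ i, (A i).IsSymm)
    (J : Set (Fin m))
    (DL : (Fin m → ℝ) → ℝ)
    (hDL : ∀ σ, bvec b0 b σ ∈ Set.range (Amat A0 A σ).mulVec →
      ∀ x, Amat A0 A σ *ᵥ x = bvec b0 b σ →
        DL σ = qf A0 b0 0 x + qvec A b c x ⬝ᵥ σ)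
    (xb : Fin n → ℝ) (σb : Fin m → ℝ)
    (hstat : Amat A0 A σb *ᵥ xb = bvec b0 b σb)
    (hJc : ∀ j ∉ J, 0 ≤ σb j ∧ qf (A j) (b j) (c j) xb ≤ 0 ∧
      σb j * qf (A j) (b j) (c j) xb = 0)
    (hJ : ∀ j ∈ J, qf (A j) (b j) (c j) xb = 0) :
    xb ∈ {x | (∀ j ∈ J, qf (A j) (b j) (c j) x = 0) ∧
        ∀ j ∉ J, qf (A j) (b j) (c j) x ≤ 0} ∧
    σb ∈ {σ | (∀ j ∉ J, 0 ≤ σ j) ∧ bvec b0 b σ ∈ Set.range (Amat A0 A σ).mulVec} ∧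
    qf A0 b0 0 xb = qf A0 b0 0 xb + qvec A b c xb ⬝ᵥ σb ∧
    qf A0 b0 0 xb + qvec A b c xb ⬝ᵥ σb = DL σb ∧
    ((Amat A0 A σb).PosSemidef →
      (∀ x, ((∀ j ∈ J, qf (A j) (b j) (c j) x = 0) ∧
          ∀ j ∉ J, qf (A j) (b j) (c j) x ≤ 0) →
        qf A0 b0 0 xb ≤ qf A0 b0 0 x) ∧
      (∀ σ, (∀ j ∉ J, 0 ≤ σ j) → bvec b0 b σ ∈ Set.range (Amat A0 A σ).mulVec →
        (Amat A0 A σ).PosSemidef → DL σ ≤ DL σb) ∧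
      ((Amat A0 A σb).PosDef →
        ∀ x, ((∀ j ∈ J, qf (A j) (b j) (c j) x = 0) ∧
            ∀ j ∉ J, qf (A j) (b j) (c j) x ≤ 0) →
          x ≠ xb → qf A0 b0 0 xb < qf A0 b0 0 x)) := by
  have hrange : bvec b0 b σb ∈ Set.range (Amat A0 A σb).mulVec := ⟨xb, hstat⟩
  have hcs : qvec A b c xb ⬝ᵥ σb = 0 := by
    apply Finset.sum_eq_zero
    intro j _
    by_cases hj : j ∈ J
    · simp only [qvec]; rw [hJ j hj, zero_mul]
    · simp only [qvec]; rw [mul_comm]; exact (hJc j hj).2.2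
  have hDLb : DL σb = qf A0 b0 0 xb + qvec A b c xb ⬝ᵥ σb := hDL σb hrange xb hstat
  refine ⟨⟨hJ, fun j hj => (hJc j hj).2.1⟩, ⟨fun j hj => (hJc j hj).1, hrange⟩,
    by rw [hcs, add_zero], hDLb.symm, ?_⟩
  intro hpsd
  have hAs : (Amat A0 A σb).IsSymm := Amat_symm hA0 hA σb
  -- lower bound on the Lagrangian at σb
  have hL : ∀ x, qf A0 b0 0 xb + qvec A b c xb ⬝ᵥ σb
      + (1/2 : ℝ) * ((x - xb) ⬝ᵥ (Amat A0 A σb) *ᵥ (x - xb))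
      = qf A0 b0 0 x + qvec A b c x ⬝ᵥ σb := by
    intro x
    rw [lag_eq A0 A b0 b c σb x, lag_eq A0 A b0 b c σb xb, quad_expand hAs hstat x]
  have hqnp : ∀ x, ((∀ j ∈ J, qf (A j) (b j) (c j) x = 0) ∧
      ∀ j ∉ J, qf (A j) (b j) (c j) x ≤ 0) → qvec A b c x ⬝ᵥ σb ≤ 0 := by
    intro x hx
    apply Finset.sum_nonpos
    intro j _
    by_cases hj : j ∈ J
    · simp only [qvec]; rw [hx.1 j hj, zero_mul]
    · simp only [qvec]
      exact mul_nonpos_of_nonpos_of_nonneg (hx.2 j hj) ((hJc j hj).1)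
  refine ⟨?_, ?_, ?_⟩
  · intro x hx
    have h1 : 0 ≤ (x - xb) ⬝ᵥ (Amat A0 A σb) *ᵥ (x - xb) := by
      have := hpsd.dotProduct_mulVec_nonneg (x - xb); simpa using this
    have h2 := hqnp x hx
    have := hL x
    nlinarith [hcs]
  · intro σ hσ hrσ hpsdσ
    obtain ⟨x', hx'⟩ := hrσ
    have hDLσ : DL σ = qf A0 b0 0 x' + qvec A b c x' ⬝ᵥ σ := hDL σ ⟨x', hx'⟩ x' hx'
    have hAsσ : (Amat A0 A σ).IsSymm := Amat_symm hA0 hA σ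
    have hqe := quad_expand hAsσ (c := ∑ k, σ k * c k) hx' xb
    have h1 : 0 ≤ (xb - x') ⬝ᵥ (Amat A0 A σ) *ᵥ (xb - x') := by
      have := hpsdσ.dotProduct_mulVec_nonneg (xb - x'); simpa using this
    have hL' : qf A0 b0 0 x' + qvec A b c x' ⬝ᵥ σ ≤ qf A0 b0 0 xb + qvec A b c xb ⬝ᵥ σ := by
      rw [lag_eq A0 A b0 b c σ x', lag_eq A0 A b0 b c σ xb, hqe]
      nlinarith
    have h2 : qvec A b c xb ⬝ᵥ σ ≤ 0 := by
      apply Finset.sum_nonpos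
      intro j _
      by_cases hj : j ∈ J
      · simp only [qvec]; rw [hJ j hj, zero_mul]
      · simp only [qvec]
        exact mul_nonpos_of_nonpos_of_nonneg ((hJc j hj).2.1) (hσ j hj)
    rw [hDLσ, hDLb, hcs]
    linarith
  · intro hpd x hx hne
    have hd : x - xb ≠ 0 := sub_ne_zero.mpr hne
    have h1 : 0 < (x - xb) ⬝ᵥ (Amat A0 A σb) *ᵥ (x - xb) := by
      have := hpd.dotProduct_mulVec_pos hd; simpa using this
    have h2 := hqnp x hx
    have := hL x
    nlinarith [hcs]
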